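/- Let H₀ and V be bounded linear operators on a Banach space and p ≥ 2 a natural number. Then s ↦ (H₀+sV)^p is twice differentiable in operator norm and its second derivative at s=t equals 2 · Σ_{p₀+p₁+p₂=p−2, pᵢ≥0} (H₀+tV)^{p₀} V (H₀+tV)^{p₁} V (H₀+tV)^{p₂}. -/

import Mathlib

lemma pow_deriv {E : Type*} [NormedAddCommGroup E] [NormedSpace ℂ E]
    (H₀ V : E →L[ℂ] E) (p : ℕ) (s : ℝ) :
    HasDerivAt (fun s : ℝ => (H₀ + s • V) ^ p)
      (∑ i ∈ Finset.range p,
        (H₀ + s • V) ^ i * V * (H₀ + s • V) ^ (p - 1 - i)) s := by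
  induction p with
  | zero => simpa using hasDerivAt_const s (1 : E →L[ℂ] E)
  | succ p ih =>
    have hA : HasDerivAt (fun s : ℝ => H₀ + s • V) V s := by
      simpa using ((hasDerivAt_id s).smul_const V).const_add H₀
    have := ih.fun_mul hA
    simp only [← pow_succ] at this
    convert this using 1
    iterate 3 rfl
    rw [Finset.sum_range_succ, Finset.sum_mul]
    congr 1
    · apply Finset.sum_congr rfl
      intro i hi
      rw [Finset.mem_range] at hi
      rw [show p + 1 - 1 - i = (p - 1 - i) + 1 by omega, pow_succ]
      simp [mul_assoc]
    · simp

lemma sum_reindex {M : Type*} [AddCommMonoid M] (q : ℕ) (f : ℕ → ℕ → M) :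
    ∑ i ∈ Finset.range (q + 2), ∑ j ∈ Finset.range i, f j (i - 1 - j)
      = ∑ a ∈ Finset.range (q + 1), ∑ b ∈ Finset.range (q + 1 - a), f a b := by
  rw [Finset.sum_sigma', Finset.sum_sigma']
  apply Finset.sum_bij' (fun x _ => (⟨x.2, x.1 - 1 - x.2⟩ : Σ _ : ℕ, ℕ))
    (fun x _ => (⟨x.1 + x.2 + 1, x.1⟩ : Σ _ : ℕ, ℕ))
  · rintro ⟨i, j⟩ h
    simp only [Finset.mem_sigma, Finset.mem_range] at h ⊢
    omega
  · rintro ⟨a, b⟩ h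
    simp only [Finset.mem_sigma, Finset.mem_range] at h ⊢
    omega
  · rintro ⟨i, j⟩ h
    simp only [Finset.mem_sigma, Finset.mem_range] at h
    simp only [Sigma.mk.inj_iff, heq_eq_eq]
    exact ⟨by omega, trivial⟩
  · rintro ⟨a, b⟩ h
    simp only [Finset.mem_sigma, Finset.mem_range] at h
    simp only [Sigma.mk.inj_iff, heq_eq_eq]
    exact ⟨trivial, by omega⟩
  · rintro ⟨i, j⟩ h
    rfl

/-- For bounded operators `H₀, V` on a complex Banach space and `p ≥ 2`, the map
`s ↦ (H₀+sV)^p` is twice differentiable in operator norm, with second derivative at `s = t`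
equal to `2 Σ_{p₀+p₁+p₂=p−2} (H₀+tV)^{p₀} V (H₀+tV)^{p₁} V (H₀+tV)^{p₂}`. -/
theorem hasDerivAt_deriv_pow_linear_path {E : Type*} [NormedAddCommGroup E] [NormedSpace ℂ E]
    (H₀ V : E →L[ℂ] E) (p : ℕ) (hp : 2 ≤ p) (t : ℝ) :
    HasDerivAt (deriv (fun s : ℝ => (H₀ + s • V) ^ p))
      (2 • ∑ p₀ ∈ Finset.range (p - 1), ∑ p₁ ∈ Finset.range (p - 1 - p₀),
        (H₀ + t • V) ^ p₀ * V * (H₀ + t • V) ^ p₁ * V * (H₀ + t • V) ^ (p - 2 - p₀ - p₁)) t := by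
  obtain ⟨q, rfl⟩ : ∃ q, p = q + 2 := ⟨p - 2, by omega⟩
  set A : E →L[ℂ] E := H₀ + t • V with hA
  have hderiv : deriv (fun s : ℝ => (H₀ + s • V) ^ (q + 2))
      = fun s => ∑ i ∈ Finset.range (q + 2),
          (H₀ + s • V) ^ i * V * (H₀ + s • V) ^ (q + 2 - 1 - i) :=
    funext fun s => (pow_deriv H₀ V (q + 2) s).deriv
  rw [hderiv]
  have hterm : ∀ i, HasDerivAt
      (fun s : ℝ => (H₀ + s • V) ^ i * V * (H₀ + s • V) ^ (q + 2 - 1 - i))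
      ((∑ j ∈ Finset.range i, A ^ j * V * A ^ (i - 1 - j)) * V * A ^ (q + 2 - 1 - i)
        + A ^ i * V * ∑ j ∈ Finset.range (q + 2 - 1 - i),
            A ^ j * V * A ^ (q + 2 - 1 - i - 1 - j)) t := by
    intro i
    have h2 := ((pow_deriv H₀ V i t).fun_mul (hasDerivAt_const t V)).fun_mul
      (pow_deriv H₀ V (q + 2 - 1 - i) t)
    rw [hA]
    convert h2 using 1
    iterate 3 rfl
    simp [Finset.mul_sum]
  have hsum := HasDerivAt.fun_sum (u := Finset.range (q + 2)) (fun i _ => hterm i)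
  convert hsum using 1
  iterate 3 rfl
  rw [Finset.sum_add_distrib, two_smul]
  congr 1
  · -- first piece, via reindexing
    have e1 : ∀ i ∈ Finset.range (q + 2),
        (∑ j ∈ Finset.range i, A ^ j * V * A ^ (i - 1 - j)) * V * A ^ (q + 2 - 1 - i)
          = ∑ j ∈ Finset.range i,
              A ^ j * V * A ^ (i - 1 - j) * V * A ^ (q - j - (i - 1 - j)) := by
      intro i hi
      rw [Finset.mem_range] at hi
      rw [Finset.sum_mul, Finset.sum_mul]
      refine Finset.sum_congr rfl fun j hj => ?_
      rw [Finset.mem_range] at hj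
      have : q + 2 - 1 - i = q - j - (i - 1 - j) := by omega
      rw [this]
    rw [Finset.sum_congr rfl e1,
      sum_reindex q (fun a b => A ^ a * V * A ^ b * V * A ^ (q - a - b))]
    refine Finset.sum_congr (by norm_num) fun a ha => ?_
    refine Finset.sum_congr (by rfl) fun b hb => ?_
    rfl
  · -- second piece
    rw [show q + 2 = (q + 1) + 1 from rfl, Finset.sum_range_succ]
    simp only [show q + 1 + 1 - 1 - (q + 1) = 0 from by omega, Finset.range_zero,
      Finset.sum_empty, mul_zero, add_zero]
    refine Finset.sum_congr (by norm_num) fun a ha => ?_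
    rw [Finset.mem_range] at ha
    rw [Finset.mul_sum]
    refine Finset.sum_congr (by rfl) fun b hb => ?_
    rw [Finset.mem_range] at hb
    have h1 : q + 1 + 1 - 1 - a - 1 - b = q + 2 - 2 - a - b := by omega
    rw [h1]
    simp [mul_assoc]
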